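/- For all a>0 and b>0 the function f_{a,b}(t) = (a√b/2) (cosh(a b t/2))⁻¹ satisfies ∫_ℝ |f_{a,b}(t)|² dt = a and ∫_ℝ |f_{a,b}'(t)|² dt − b ∫_ℝ |f_{a,b}(t)|⁴ dt = − b² a³ / 12. -/

import Mathlib

open MeasureTheory

noncomputable section

/-- We model `ℝ³` as `(ℝ × ℝ) × ℝ`, writing `x = (x_⊥, x₃)`. -/
abbrev R3 := (ℝ × ℝ) × ℝ

/-- The Euclidean norm `|x|` on `ℝ³`. -/
def enorm3 (x : R3) : ℝ := Real.sqrt (x.1.1 ^ 2 + x.1.2 ^ 2 + x.2 ^ 2)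

/-- The partial derivative `∂₁φ`. -/
def d1 (φ : R3 → ℂ) (x : R3) : ℂ := fderiv ℝ φ x ((1, 0), 0)

/-- The partial derivative `∂₂φ`. -/
def d2 (φ : R3 → ℂ) (x : R3) : ℂ := fderiv ℝ φ x ((0, 1), 0)

/-- The partial derivative `∂₃φ`. -/
def d3 (φ : R3 → ℂ) (x : R3) : ℂ := fderiv ℝ φ x ((0, 0), 1)

/-- The perpendicular part of the magnetic kinetic energy in the symmetric gauge
`A(x) = ((-B/2)x₂, (B/2)x₁, 0)`:
`∫ (|−i∂₁φ−(B/2)x₂φ|² + |−i∂₂φ+(B/2)x₁φ|²) dx`. -/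
def kinPerp (B : ℝ) (φ : R3 → ℂ) : ℝ :=
  ∫ x : R3, (‖-Complex.I * d1 φ x - ((B / 2 * x.1.2 : ℝ) : ℂ) * φ x‖ ^ 2
    + ‖-Complex.I * d2 φ x + ((B / 2 * x.1.1 : ℝ) : ℂ) * φ x‖ ^ 2)

/-- The full magnetic kinetic energy
`∫ (|−i∂₁φ−(B/2)x₂φ|² + |−i∂₂φ+(B/2)x₁φ|² + |∂₃φ|²) dx`. -/
def kinEnergy (B : ℝ) (φ : R3 → ℂ) : ℝ :=
  ∫ x : R3, (‖-Complex.I * d1 φ x - ((B / 2 * x.1.2 : ℝ) : ℂ) * φ x‖ ^ 2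
    + ‖-Complex.I * d2 φ x + ((B / 2 * x.1.1 : ℝ) : ℂ) * φ x‖ ^ 2
    + ‖d3 φ x‖ ^ 2)

/-- The Coulomb self-energy `∬ |φ(x)|²|φ(y)|²|x−y|⁻¹ dx dy` (without the factor 1/2). -/
def coulomb (φ : R3 → ℂ) : ℝ :=
  ∫ x : R3, ∫ y : R3, ‖φ x‖ ^ 2 * ‖φ y‖ ^ 2 / enorm3 (x - y)

/-- `D(|φ|²,|φ|²) = (1/2) ∬ |φ(x)|²|φ(y)|²|x−y|⁻¹ dx dy`. -/
def Dself (φ : R3 → ℂ) : ℝ := (1 / 2) * coulomb φ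

/-- The Pekar functional `E_{B,α}[φ]`. -/
def pekar (B α : ℝ) (φ : R3 → ℂ) : ℝ := kinEnergy B φ - α / 2 * coulomb φ

/-- `φ ∈ C_c^∞(ℝ³, ℂ)`. -/
def IsCcSmooth (φ : R3 → ℂ) : Prop := ContDiff ℝ (⊤ : ℕ∞) φ ∧ HasCompactSupport φ

/-- The Pekar ground state energy `E^c_{B,α}`, an infimum over normalized
compactly supported smooth functions. -/
def groundE (B α : ℝ) : ℝ :=
  sInf {E : ℝ | ∃ φ : R3 → ℂ, IsCcSmooth φ ∧ (∫ x : R3, ‖φ x‖ ^ 2) = 1 ∧ E = pekar B α φ}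

/-- The `L²(ℝ³)` norm `‖φ‖`. -/
def L2norm (φ : R3 → ℂ) : ℝ := Real.sqrt (∫ x : R3, ‖φ x‖ ^ 2)

/-- The `L²(ℝ³)` norm `‖∂₃φ‖`. -/
def L2normD3 (φ : R3 → ℂ) : ℝ := Real.sqrt (∫ x : R3, ‖d3 φ x‖ ^ 2)

/-- The kernel `K_B(x_⊥) = ln(1+√(1+(ln B)²|x_⊥|²)) − ln(√B |x_⊥|)` on `ℝ²`. -/
def Kker (B : ℝ) (p : ℝ × ℝ) : ℝ :=
  Real.log (1 + Real.sqrt (1 + Real.log B ^ 2 * (p.1 ^ 2 + p.2 ^ 2)))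
    - Real.log (Real.sqrt B * Real.sqrt (p.1 ^ 2 + p.2 ^ 2))

/-- The remainder term
`R_B^{(2)}(φ) = ∫_ℝ ∬_{ℝ²×ℝ²} |φ(x_⊥,x₃)|² |φ(y_⊥,x₃)|² K_B(x_⊥−y_⊥) dy_⊥ dx_⊥ dx₃`. -/
def R2err (B : ℝ) (φ : R3 → ℂ) : ℝ :=
  ∫ x3 : ℝ, ∫ xp : ℝ × ℝ, ∫ yp : ℝ × ℝ,
    ‖φ (xp, x3)‖ ^ 2 * ‖φ (yp, x3)‖ ^ 2 * Kker B (xp - yp)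

/-- The integral kernel of the lowest Landau level projection:
`P₀(x_⊥,y_⊥) = (B/(2π)) e^{−B|x_⊥−y_⊥|²/4} e^{iB(x₁y₂−x₂y₁)/2}`. -/
def P0ker (B : ℝ) (x y : ℝ × ℝ) : ℂ :=
  ((B / (2 * Real.pi) * Real.exp (-B * ((x.1 - y.1) ^ 2 + (x.2 - y.2) ^ 2) / 4) : ℝ) : ℂ)
    * Complex.exp (Complex.I * ((B * (x.1 * y.2 - x.2 * y.1) / 2 : ℝ) : ℂ))

/-- The lowest Landau level projection acting on functions on `ℝ³` (in the `x_⊥` variables). -/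
def P0 (B : ℝ) (φ : R3 → ℂ) : R3 → ℂ :=
  fun x => ∫ yp : ℝ × ℝ, P0ker B x.1 yp * φ (yp, x.2)

/-- `P_> φ = φ − P₀ φ`. -/
def Pgt (B : ℝ) (φ : R3 → ℂ) : R3 → ℂ := fun x => φ x - P0 B φ x

/-- The quadratic form of the two-dimensional Landau Hamiltonian
`H_B = (−i∂₁ + A₁)² + (−i∂₂ + A₂)²` in the symmetric gauge. -/
def kin2 (B : ℝ) (g : ℝ × ℝ → ℂ) : ℝ :=
  ∫ x : ℝ × ℝ, (‖-Complex.I * fderiv ℝ g x (1, 0) - ((B / 2 * x.2 : ℝ) : ℂ) * g x‖ ^ 2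
    + ‖-Complex.I * fderiv ℝ g x (0, 1) + ((B / 2 * x.1 : ℝ) : ℂ) * g x‖ ^ 2)

/-- The kernel `I_{k_⊥}(x_⊥,y_⊥) = P₀(x_⊥,y_⊥) e^{k_⊥∧(x_⊥−y_⊥)/2} e^{i k_⊥·(x_⊥+y_⊥)/2}`
with `a∧b = a₁b₂ − a₂b₁`. -/
def Iker (B : ℝ) (k x y : ℝ × ℝ) : ℂ :=
  P0ker B x y * ((Real.exp ((k.1 * (x.2 - y.2) - k.2 * (x.1 - y.1)) / 2) : ℝ) : ℂ)
    * Complex.exp (Complex.I * (((k.1 * (x.1 + y.1) + k.2 * (x.2 + y.2)) / 2 : ℝ) : ℂ))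

/-- The explicit minimizer `f_{a,b}(t) = (a√b/2)(cosh(abt/2))⁻¹`. -/
def fab (a b : ℝ) (t : ℝ) : ℝ := a * Real.sqrt b / 2 * (Real.cosh (a * b * t / 2))⁻¹

open Real Set Filter Topology

lemma integrable_exp_neg_abs' {c : ℝ} (hc : 0 < c) :
    Integrable (fun x : ℝ => Real.exp (-(c * |x|))) := by
  have h1 : IntegrableOn (fun x : ℝ => Real.exp (-(c * |x|))) (Ioi 0) := by
    refine (exp_neg_integrableOn_Ioi 0 hc).congr_fun (fun x hx => ?_) measurableSet_Ioi
    rw [abs_of_pos hx]; simp only [neg_mul]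
  have h2 : IntegrableOn (fun x : ℝ => Real.exp (-(c * |x|))) (Iic 0) := by
    rw [← Measure.map_neg_eq_self (volume : Measure ℝ)]
    have m : MeasurableEmbedding fun x : ℝ => -x := (Homeomorph.neg ℝ).measurableEmbedding
    rw [m.integrableOn_map_iff]
    simp_rw [Function.comp_def, abs_neg, neg_preimage, neg_Iic, neg_zero]
    exact (integrableOn_Ici_iff_integrableOn_Ioi).mpr h1
  have := h2.union h1
  rwa [Iic_union_Ioi, integrableOn_univ] at this

lemma sech_le {x : ℝ} : (Real.cosh x)⁻¹ ≤ 2 * Real.exp (-|x|) := by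
  have h : Real.exp |x| / 2 ≤ Real.cosh x := by
    rw [Real.cosh_eq]
    rcases abs_cases x with ⟨h1, _⟩ | ⟨h1, _⟩ <;> rw [h1] <;>
      nlinarith [Real.exp_pos x, Real.exp_pos (-x)]
  rw [Real.exp_neg]
  have h2 : (0:ℝ) < Real.exp |x| / 2 := by positivity
  calc (Real.cosh x)⁻¹ ≤ (Real.exp |x| / 2)⁻¹ := by
        exact inv_anti₀ h2 h
    _ = 2 * (Real.exp |x|)⁻¹ := by field_simp

lemma integrable_sechsq {k : ℝ} (hk : 0 < k) :
    Integrable (fun t : ℝ => ((Real.cosh (k * t))⁻¹) ^ 2) := by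
  have hint : Integrable (fun t : ℝ => 4 * Real.exp (-(2 * k * |t|))) :=
    (integrable_exp_neg_abs' (by linarith : (0:ℝ) < 2 * k)).const_mul 4
  refine hint.mono ?_ ?_
  · exact (Continuous.inv₀ (Real.continuous_cosh.comp (continuous_const.mul continuous_id))
      (fun t => (Real.cosh_pos (k*t)).ne')).pow 2 |>.aestronglyMeasurable
  · refine Filter.Eventually.of_forall (fun t => ?_)
    have h1 : (Real.cosh (k * t))⁻¹ ≤ 2 * Real.exp (-|k * t|) := sech_le
    have h0 : (0:ℝ) ≤ (Real.cosh (k * t))⁻¹ := by positivity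
    have h2 : ((Real.cosh (k * t))⁻¹) ^ 2 ≤ (2 * Real.exp (-|k * t|)) ^ 2 := by
      exact pow_le_pow_left₀ h0 h1 2
    rw [Real.norm_eq_abs, Real.norm_eq_abs, abs_of_nonneg (by positivity),
      abs_of_nonneg (by positivity)]
    calc ((Real.cosh (k * t))⁻¹) ^ 2 ≤ (2 * Real.exp (-|k * t|)) ^ 2 := h2
      _ = 4 * Real.exp (-(2 * k * |t|)) := by
          rw [mul_pow, ← Real.exp_nat_mul, abs_mul, abs_of_pos hk]
          norm_num
          ring_nf

lemma hasDerivAt_tanh' (k t : ℝ) :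
    HasDerivAt (fun t => Real.sinh (k * t) / Real.cosh (k * t))
      (k * ((Real.cosh (k * t))⁻¹) ^ 2) t := by
  have hkt : HasDerivAt (fun t : ℝ => k * t) k t := by
    simpa using (hasDerivAt_id t).const_mul k
  have hs : HasDerivAt (fun t => Real.sinh (k * t)) (Real.cosh (k * t) * k) t :=
    (Real.hasDerivAt_sinh (k * t)).comp t hkt
  have hc : HasDerivAt (fun t => Real.cosh (k * t)) (Real.sinh (k * t) * k) t :=
    (Real.hasDerivAt_cosh (k * t)).comp t hkt
  have h := hs.div hc (Real.cosh_pos (k * t)).ne'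
  refine h.congr_deriv (Eq.symm ?_)
  have hid : Real.cosh (k * t) ^ 2 - Real.sinh (k * t) ^ 2 = 1 :=
    Real.cosh_sq_sub_sinh_sq (k * t)
  have hC : Real.cosh (k * t) ≠ 0 := (Real.cosh_pos (k * t)).ne'
  field_simp
  linear_combination (-k) * hid

lemma tendsto_tanh_top {k : ℝ} (hk : 0 < k) :
    Tendsto (fun t => Real.sinh (k * t) / Real.cosh (k * t)) atTop (𝓝 1) := by
  have key : ∀ x : ℝ, Real.sinh x / Real.cosh x
      = (1 - Real.exp (-(2 * x))) / (1 + Real.exp (-(2 * x))) := by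
    intro x
    have h2 : Real.exp (-(2 * x)) = ((Real.exp x) * (Real.exp x))⁻¹ := by
      rw [Real.exp_neg, two_mul, Real.exp_add]
    have he := Real.exp_ne_zero x
    have hpos : (0:ℝ) < 1 + Real.exp (-(2 * x)) := by positivity
    rw [Real.sinh_eq, Real.cosh_eq, h2, Real.exp_neg]
    field_simp
  simp_rw [key]
  have h1 : Tendsto (fun t : ℝ => Real.exp (-(2 * (k * t)))) atTop (𝓝 0) := by
    apply Real.tendsto_exp_atBot.comp
    have : Tendsto (fun t : ℝ => 2 * (k * t)) atTop atTop :=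
      (tendsto_id.const_mul_atTop hk).const_mul_atTop two_pos
    exact tendsto_neg_atBot_iff.mpr this
  have h2 : Tendsto (fun t => (1 - Real.exp (-(2 * (k * t)))) / (1 + Real.exp (-(2 * (k * t)))))
      atTop (𝓝 ((1 - 0) / (1 + 0))) :=
    ((tendsto_const_nhds (x := (1:ℝ))).sub h1).div ((tendsto_const_nhds (x := (1:ℝ))).add h1)
      (by norm_num)
  simpa using h2


lemma tendsto_tanh_bot {k : ℝ} (hk : 0 < k) :
    Tendsto (fun t => Real.sinh (k * t) / Real.cosh (k * t)) atBot (𝓝 (-1)) := by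
  have h := ((tendsto_tanh_top hk).comp tendsto_neg_atBot_atTop).neg
  simp only [Function.comp_def] at h
  convert h using 2 with t
  · rw [mul_neg, Real.sinh_neg, Real.cosh_neg]
    ring

lemma integral_sechsq {k : ℝ} (hk : 0 < k) :
    (∫ t : ℝ, ((Real.cosh (k * t))⁻¹) ^ 2) = 2 / k := by
  have hF : ∀ t, HasDerivAt (fun t => Real.sinh (k * t) / Real.cosh (k * t) / k)
      (((Real.cosh (k * t))⁻¹) ^ 2) t := by
    intro t
    have h := (hasDerivAt_tanh' k t).div_const k
    rwa [mul_div_cancel_left₀ _ hk.ne'] at h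
  have h := integral_of_hasDerivAt_of_tendsto hF (integrable_sechsq hk)
    ((tendsto_tanh_bot hk).div_const k) ((tendsto_tanh_top hk).div_const k)
  rw [h]; ring

lemma integrable_sech4 {k : ℝ} (hk : 0 < k) :
    Integrable (fun t : ℝ => ((Real.cosh (k * t))⁻¹) ^ 4) := by
  refine (integrable_sechsq hk).mono ?_ (Filter.Eventually.of_forall fun t => ?_)
  · exact ((Real.continuous_cosh.comp (continuous_const.mul continuous_id)).inv₀
      (fun t => (Real.cosh_pos (k * t)).ne')).pow 4 |>.aestronglyMeasurable
  · have h1 : (1:ℝ) ≤ Real.cosh (k * t) := Real.one_le_cosh _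
    have h2 : (Real.cosh (k * t))⁻¹ ≤ 1 := inv_le_one_of_one_le₀ h1
    have h0 : (0:ℝ) ≤ (Real.cosh (k * t))⁻¹ := by positivity
    rw [Real.norm_eq_abs, Real.norm_eq_abs, abs_of_nonneg (by positivity),
      abs_of_nonneg (by positivity)]
    calc ((Real.cosh (k * t))⁻¹) ^ 4 = ((Real.cosh (k * t))⁻¹) ^ 2 * ((Real.cosh (k * t))⁻¹) ^ 2 := by ring
      _ ≤ 1 * ((Real.cosh (k * t))⁻¹) ^ 2 := by
          gcongr
          exact pow_le_one₀ h0 h2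
      _ = ((Real.cosh (k * t))⁻¹) ^ 2 := one_mul _

lemma integral_sech4 {k : ℝ} (hk : 0 < k) :
    (∫ t : ℝ, ((Real.cosh (k * t))⁻¹) ^ 4) = 4 / (3 * k) := by
  have hF : ∀ t, HasDerivAt
      (fun t => (Real.sinh (k * t) / Real.cosh (k * t)
        - (Real.sinh (k * t) / Real.cosh (k * t)) ^ 3 / 3) / k)
      (((Real.cosh (k * t))⁻¹) ^ 4) t := by
    intro t
    have hT := hasDerivAt_tanh' k t
    have h := (hT.sub ((hT.pow 3).div_const 3)).div_const k
    refine h.congr_deriv (Eq.symm ?_)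
    have hid : Real.cosh (k * t) ^ 2 - Real.sinh (k * t) ^ 2 = 1 :=
      Real.cosh_sq_sub_sinh_sq (k * t)
    have hC : Real.cosh (k * t) ≠ 0 := (Real.cosh_pos (k * t)).ne'
    norm_num
    field_simp
    linear_combination (-1) * hid
  have htop := (((tendsto_tanh_top hk).sub (((tendsto_tanh_top hk).pow 3).div_const 3)).div_const k)
  have hbot := (((tendsto_tanh_bot hk).sub (((tendsto_tanh_bot hk).pow 3).div_const 3)).div_const k)
  have h := integral_of_hasDerivAt_of_tendsto hF (integrable_sech4 hk) hbot htop
  rw [h]; ring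

lemma integrable_sinh2sech4 {k : ℝ} (hk : 0 < k) :
    Integrable (fun t : ℝ => Real.sinh (k * t) ^ 2 * ((Real.cosh (k * t))⁻¹) ^ 4) := by
  refine (integrable_sechsq hk).mono ?_ (Filter.Eventually.of_forall fun t => ?_)
  · exact ((Real.continuous_sinh.comp (continuous_const.mul continuous_id)).pow 2).mul
      (((Real.continuous_cosh.comp (continuous_const.mul continuous_id)).inv₀
      (fun t => (Real.cosh_pos (k * t)).ne')).pow 4) |>.aestronglyMeasurable
  · have h1 : Real.sinh (k * t) ^ 2 ≤ Real.cosh (k * t) ^ 2 := by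
      nlinarith [Real.cosh_sq_sub_sinh_sq (k * t)]
    have hC : Real.cosh (k * t) ≠ 0 := (Real.cosh_pos (k * t)).ne'
    rw [Real.norm_eq_abs, Real.norm_eq_abs, abs_of_nonneg (by positivity),
      abs_of_nonneg (by positivity)]
    calc Real.sinh (k * t) ^ 2 * ((Real.cosh (k * t))⁻¹) ^ 4
        ≤ Real.cosh (k * t) ^ 2 * ((Real.cosh (k * t))⁻¹) ^ 4 := by
          exact mul_le_mul_of_nonneg_right h1 (by positivity)
      _ = ((Real.cosh (k * t))⁻¹) ^ 2 := by field_simp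

lemma integral_sinh2sech4 {k : ℝ} (hk : 0 < k) :
    (∫ t : ℝ, Real.sinh (k * t) ^ 2 * ((Real.cosh (k * t))⁻¹) ^ 4) = 2 / (3 * k) := by
  have hF : ∀ t, HasDerivAt
      (fun t => (Real.sinh (k * t) / Real.cosh (k * t)) ^ 3 / (3 * k))
      (Real.sinh (k * t) ^ 2 * ((Real.cosh (k * t))⁻¹) ^ 4) t := by
    intro t
    have hT := hasDerivAt_tanh' k t
    have h := (hT.pow 3).div_const (3 * k)
    refine h.congr_deriv (Eq.symm ?_)
    have hC : Real.cosh (k * t) ≠ 0 := (Real.cosh_pos (k * t)).ne'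
    norm_num
    field_simp
  have htop := (((tendsto_tanh_top hk).pow 3).div_const (3 * k))
  have hbot := (((tendsto_tanh_bot hk).pow 3).div_const (3 * k))
  have h := integral_of_hasDerivAt_of_tendsto hF (integrable_sinh2sech4 hk) hbot htop
  rw [h]; ring_nf

/-- `f_{a,b}` has mass `a` and attains the one-dimensional minimum `−b²a³/12`. -/
theorem one_dim_minimizer (a b : ℝ) (ha : 0 < a) (hb : 0 < b) :
    (∫ t : ℝ, fab a b t ^ 2) = a ∧
    (∫ t : ℝ, deriv (fab a b) t ^ 2) - b * (∫ t : ℝ, fab a b t ^ 4)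
      = -(b ^ 2 * a ^ 3) / 12 := by
  set k : ℝ := a * b / 2 with hk_def
  set c : ℝ := a * Real.sqrt b / 2 with hc_def
  have hk : 0 < k := by positivity
  have hsb : Real.sqrt b ^ 2 = b := Real.sq_sqrt hb.le
  have hc2 : c ^ 2 = a ^ 2 * b / 4 := by
    rw [hc_def, div_pow, mul_pow, hsb]; norm_num
  have hfab : fab a b = fun t => c * (Real.cosh (k * t))⁻¹ := by
    funext t
    rw [fab, hc_def, hk_def]
    ring_nf
  have hder : ∀ t, HasDerivAt (fab a b)
      (-(c * k) * (Real.sinh (k * t) * ((Real.cosh (k * t))⁻¹) ^ 2)) t := by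
    intro t
    rw [hfab]
    have hkt : HasDerivAt (fun t : ℝ => k * t) k t := by
      simpa using (hasDerivAt_id t).const_mul k
    have hc' : HasDerivAt (fun t => Real.cosh (k * t)) (Real.sinh (k * t) * k) t :=
      (Real.hasDerivAt_cosh (k * t)).comp t hkt
    have hinv := (hc'.inv (Real.cosh_pos (k * t)).ne').const_mul c
    refine hinv.congr_deriv (Eq.symm ?_)
    field_simp
  have hmass : (∫ t : ℝ, fab a b t ^ 2) = a := by
    have h1 : ∀ t : ℝ, fab a b t ^ 2 = c ^ 2 * ((Real.cosh (k * t))⁻¹) ^ 2 := by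
      intro t; rw [hfab]; ring
    simp_rw [h1]
    rw [integral_const_mul, integral_sechsq hk, hc2, hk_def]
    field_simp
    ring
  refine ⟨hmass, ?_⟩
  have h2 : (∫ t : ℝ, deriv (fab a b) t ^ 2) = (c * k) ^ 2 * (2 / (3 * k)) := by
    have h1 : ∀ t : ℝ, deriv (fab a b) t ^ 2
        = (c * k) ^ 2 * (Real.sinh (k * t) ^ 2 * ((Real.cosh (k * t))⁻¹) ^ 4) := by
      intro t; rw [(hder t).deriv]; ring
    simp_rw [h1]
    rw [integral_const_mul, integral_sinh2sech4 hk]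
  have h3 : (∫ t : ℝ, fab a b t ^ 4) = c ^ 4 * (4 / (3 * k)) := by
    have h1 : ∀ t : ℝ, fab a b t ^ 4 = c ^ 4 * ((Real.cosh (k * t))⁻¹) ^ 4 := by
      intro t; rw [hfab]; ring
    simp_rw [h1]
    rw [integral_const_mul, integral_sech4 hk]
  rw [h2, h3]
  have hc4 : c ^ 4 = (a ^ 2 * b / 4) ^ 2 := by rw [← hc2]; ring
  rw [mul_pow, hc2, hc4, hk_def]
  field_simp
  ring
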